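/- Let X be a Lorentzian pre-length space that is timelike path-connected (every pair x ≪ y is joined by a timelike curve). If X is distinguishing (I⁺(x) = I⁺(y) implies x = y, and I⁻(x) = I⁻(y) implies x = y), then X is locally distinguishing: for all x ≠ y and every neighbourhood U of x and y, I⁺(x) ∩ U ≠ I⁺(y) ∩ U or I⁻(x) ∩ U ≠ I⁻(y) ∩ U. -/

import Mathlib

open Set

/-- A Lorentzian pre-length space: a set `X` with an extended time separation
function `ell : X × X → {-∞} ∪ [0,∞]` (modelled as `EReal` whose values are either
`⊥ = -∞` or nonnegative) satisfying the reverse triangle inequality (with the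
convention `-∞ + ∞ = -∞`, which is `EReal` addition) and `ell x x ≥ 0`. -/
structure LPLS (X : Type*) where
  ell : X → X → EReal
  range_cond : ∀ x y, ell x y = ⊥ ∨ 0 ≤ ell x y
  rev_tri : ∀ x y z, ell x y + ell y z ≤ ell x z
  refl_nonneg : ∀ x, 0 ≤ ell x x

namespace LPLS

variable {X : Type*}

/-- The causal relation `x ≤ y` iff `ℓ(x,y) ≥ 0`. -/
def causal (L : LPLS X) (x y : X) : Prop := 0 ≤ L.ell x y

/-- The chronological (timelike) relation `x ≪ y` iff `ℓ(x,y) > 0`. -/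
def chron (L : LPLS X) (x y : X) : Prop := 0 < L.ell x y

/-- The time separation function `τ = max(0, ℓ)`. -/
noncomputable def tau (L : LPLS X) (x y : X) : EReal := max 0 (L.ell x y)

/-- The chronological future `I⁺(x)`. -/
def Iplus (L : LPLS X) (x : X) : Set X := {z | L.chron x z}

/-- The chronological past `I⁻(x)`. -/
def Iminus (L : LPLS X) (x : X) : Set X := {z | L.chron z x}

/-- A causal curve on `[a,b]`: continuous and totally ordered by `≤`. -/
def IsCausalCurve [TopologicalSpace X] (L : LPLS X) (γ : ℝ → X) (a b : ℝ) : Prop :=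
  a ≤ b ∧ ContinuousOn γ (Icc a b) ∧
    ∀ ⦃s t : ℝ⦄, s ∈ Icc a b → t ∈ Icc a b → s < t → L.causal (γ s) (γ t)

/-- A timelike curve on `[a,b]`: continuous and totally ordered by `≪`. -/
def IsTimelikeCurve [TopologicalSpace X] (L : LPLS X) (γ : ℝ → X) (a b : ℝ) : Prop :=
  a ≤ b ∧ ContinuousOn γ (Icc a b) ∧
    ∀ ⦃s t : ℝ⦄, s ∈ Icc a b → t ∈ Icc a b → s < t → L.chron (γ s) (γ t)

/-- A curve is null on `[a,b]` if no two of its points are chronologically related. -/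
def IsNullOn (L : LPLS X) (γ : ℝ → X) (a b : ℝ) : Prop :=
  ∀ ⦃s t : ℝ⦄, s ∈ Icc a b → t ∈ Icc a b → s < t → ¬ L.chron (γ s) (γ t)

/-- The `τ`-length of a curve on `[a,b]`:
`L_τ(γ) = inf { Σ τ(γ(t_{i-1}), γ(t_i)) : a = t₀ < t₁ < … < t_N = b }`. -/
noncomputable def len (L : LPLS X) (γ : ℝ → X) (a b : ℝ) : EReal :=
  ⨅ (N : ℕ) (t : Fin (N + 1) → ℝ) (_ : StrictMono t) (_ : t 0 = a)
      (_ : t (Fin.last N) = b),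
    ∑ i : Fin N, L.tau (γ (t i.castSucc)) (γ (t i.succ))

/-- A (causal) maximizer: a causal curve whose length realizes the time separation
of its endpoints. -/
def IsMaximizer [TopologicalSpace X] (L : LPLS X) (γ : ℝ → X) (a b : ℝ) : Prop :=
  L.IsCausalCurve γ a b ∧ L.len γ a b = L.tau (γ a) (γ b)

/-- Regularity: every causal maximizer is either timelike or null. -/
def Regular [TopologicalSpace X] (L : LPLS X) : Prop :=
  ∀ (γ : ℝ → X) (a b : ℝ), a < b → L.IsMaximizer γ a b →
    L.IsTimelikeCurve γ a b ∨ L.IsNullOn γ a b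

/-- The topology is finer than the chronological topology: all `I±(x)` are open. -/
def ChronOpen [TopologicalSpace X] (L : LPLS X) : Prop :=
  ∀ x : X, IsOpen (L.Iplus x) ∧ IsOpen (L.Iminus x)

/-- Locally distinguishing: distinct points are distinguished by their futures or
pasts within every common neighbourhood. -/
def LocallyDistinguishing [TopologicalSpace X] (L : LPLS X) : Prop :=
  ∀ ⦃x y : X⦄, x ≠ y → ∀ U : Set X, U ∈ nhds x → U ∈ nhds y →
    L.Iplus x ∩ U ≠ L.Iplus y ∩ U ∨ L.Iminus x ∩ U ≠ L.Iminus y ∩ U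

/-- Not locally timelike isolating: every neighbourhood of every point meets its
chronological future and past. -/
def NotLocallyIsolating [TopologicalSpace X] (L : LPLS X) : Prop :=
  ∀ x : X, ∀ U ∈ nhds x, (L.Iplus x ∩ U).Nonempty ∧ (L.Iminus x ∩ U).Nonempty

/-- The push-up property. -/
def PushUp (L : LPLS X) : Prop :=
  (∀ ⦃x y z : X⦄, L.chron x y → L.causal y z → L.chron x z) ∧
  (∀ ⦃x y z : X⦄, L.causal x y → L.chron y z → L.chron x z)

end LPLS

lemma LPLS.chron_trans {X : Type*} (L : LPLS X) {a b c : X}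
    (h1 : L.chron a b) (h2 : L.chron b c) : L.chron a c := by
  unfold LPLS.chron at *
  calc (0 : EReal) < L.ell a b := h1
    _ = L.ell a b + 0 := by rw [add_zero]
    _ ≤ L.ell a b + L.ell b c := add_le_add_right h2.le _
    _ ≤ L.ell a c := L.rev_tri a b c

lemma stmt9_aux {X : Type*} [TopologicalSpace X] (L : LPLS X)
    (hpath : ∀ x y : X, L.chron x y → ∃ γ : ℝ → X,
      L.IsTimelikeCurve γ 0 1 ∧ γ 0 = x ∧ γ 1 = y)
    {x y z : X} {U : Set X}
    (hEq : L.Iplus x ∩ U = L.Iplus y ∩ U) (hUx : U ∈ nhds x)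
    (hz : L.chron x z) : L.chron y z := by
  obtain ⟨γ, ⟨h01, hc, ht⟩, hγ0, hγ1⟩ := hpath x z hz
  have h0 : (0:ℝ) ∈ Icc (0:ℝ) 1 := by constructor <;> norm_num
  have h1 : (1:ℝ) ∈ Icc (0:ℝ) 1 := by constructor <;> norm_num
  have hcw : ContinuousWithinAt γ (Icc 0 1) 0 := hc 0 h0
  have hmem : γ ⁻¹' U ∈ nhdsWithin 0 (Icc (0:ℝ) 1) := hcw (hγ0 ▸ hUx)
  obtain ⟨V, hVo, hV0, hVsub⟩ := mem_nhdsWithin.mp hmem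
  obtain ⟨δ, hδ, hball⟩ := Metric.isOpen_iff.mp hVo 0 hV0
  set t : ℝ := min (δ/2) (1/2) with ht_def
  have htpos : 0 < t := lt_min (by linarith) (by norm_num)
  have htlt1 : t < 1 := lt_of_le_of_lt (min_le_right _ _) (by norm_num)
  have htIcc : t ∈ Icc (0:ℝ) 1 := ⟨htpos.le, htlt1.le⟩
  have htV : t ∈ V := by
    apply hball
    rw [Metric.mem_ball, Real.dist_eq, sub_zero, abs_of_pos htpos]
    exact lt_of_le_of_lt (min_le_left _ _) (by linarith)
  have hγtU : γ t ∈ U := hVsub ⟨htV, htIcc⟩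
  have hxγt : L.chron x (γ t) := hγ0 ▸ ht h0 htIcc htpos
  have hγtz : L.chron (γ t) z := hγ1 ▸ ht htIcc h1 htlt1
  have hmemx : γ t ∈ L.Iplus x ∩ U := ⟨hxγt, hγtU⟩
  have hmemy : γ t ∈ L.Iplus y ∩ U := hEq ▸ hmemx
  exact L.chron_trans hmemy.1 hγtz

/-- a timelike path-connected, distinguishing Lorentzian
pre-length space (topology finer than the chronological topology) is locally
distinguishing. -/
theorem stmt9 {X : Type*} [TopologicalSpace X] (L : LPLS X) (hopen : L.ChronOpen)
    (hpath : ∀ x y : X, L.chron x y → ∃ γ : ℝ → X,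
      L.IsTimelikeCurve γ 0 1 ∧ γ 0 = x ∧ γ 1 = y)
    (hfd : ∀ x y : X, L.Iplus x = L.Iplus y → x = y)
    (hpd : ∀ x y : X, L.Iminus x = L.Iminus y → x = y) :
    L.LocallyDistinguishing := by
  intro x y hxy U hUx hUy
  left
  intro hEq
  apply hxy
  apply hfd
  ext z
  constructor
  · exact fun h => stmt9_aux L hpath hEq hUx h
  · exact fun h => stmt9_aux L hpath hEq.symm hUy h
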